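/- For m ≥ 1 and every fixed ρ ∈ ℝ, the function z ↦ J_{m,n}(z,ρ) is real-differentiable on ℂ and its Wirtinger derivative in z satisfies ∂/∂z J_{m,n}(z,ρ) = m · J_{m−1,n}(z,ρ) for all z ∈ ℂ. -/

import Mathlib

open MeasureTheory ProbabilityTheory Complex Finset

/-- Itô's complex Hermite polynomial `J_{m,n}(z, ρ)`. -/
noncomputable def complexHermite (m n : ℕ) (z : ℂ) (ρ : ℝ) : ℂ :=
  ∑ k ∈ Finset.range (min m n + 1),
    (-1 : ℂ) ^ k * (Nat.factorial k : ℂ) * (Nat.choose m k : ℂ) * (Nat.choose n k : ℂ) *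
      (ρ : ℂ) ^ k * z ^ (m - k) * (starRingEnd ℂ z) ^ (n - k)

/-- Wirtinger derivative `∂f/∂z = (1/2)(∂f/∂x − i ∂f/∂y)`. -/
noncomputable def wirtingerDeriv (f : ℂ → ℂ) (z : ℂ) : ℂ :=
  (fderiv ℝ f z 1 - Complex.I * fderiv ℝ f z Complex.I) / 2

/-- Conjugate Wirtinger derivative `∂f/∂z̄ = (1/2)(∂f/∂x + i ∂f/∂y)`. -/
noncomputable def wirtingerDerivBar (f : ℂ → ℂ) (z : ℂ) : ℂ :=
  (fderiv ℝ f z 1 + Complex.I * fderiv ℝ f z Complex.I) / 2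


lemma hasFDerivAt_mono (a b : ℕ) (z : ℂ) :
    HasFDerivAt (fun w : ℂ => w ^ a * (starRingEnd ℂ w) ^ b)
      (((a : ℂ) * z ^ (a-1) * (starRingEnd ℂ z) ^ b) • ContinuousLinearMap.id ℝ ℂ +
       ((b : ℂ) * z ^ a * (starRingEnd ℂ z) ^ (b-1)) • (Complex.conjCLE : ℂ →L[ℝ] ℂ)) z := by
  have h1 : HasFDerivAt (fun w : ℂ => w ^ a)
      (((a : ℂ) * z ^ (a-1)) • (ContinuousLinearMap.id ℝ ℂ)) z := by
    have h := ((hasDerivAt_pow a z).hasFDerivAt).restrictScalars ℝ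
    refine h.congr_fderiv ?_
    ext v; simp [mul_comm]
  have hc : HasFDerivAt (fun w : ℂ => starRingEnd ℂ w) (Complex.conjCLE : ℂ →L[ℝ] ℂ) z :=
    Complex.conjCLE.hasFDerivAt
  have h2 : HasFDerivAt (fun w : ℂ => (starRingEnd ℂ w) ^ b)
      (((b:ℂ) * (starRingEnd ℂ z)^(b-1)) • (Complex.conjCLE : ℂ →L[ℝ] ℂ)) z := by
    have hp := ((hasDerivAt_pow b (starRingEnd ℂ z)).hasFDerivAt).restrictScalars ℝ
    have h := hp.comp z hc
    refine h.congr_fderiv ?_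
    ext v; simp [mul_comm]
  have h := h1.mul h2
  refine h.congr_fderiv ?_
  ext v; simp; ring

lemma hasFDerivAt_complexHermite (m n : ℕ) (ρ : ℝ) (z : ℂ) :
    HasFDerivAt (fun w => complexHermite m n w ρ)
      (∑ k ∈ Finset.range (min m n + 1),
        ((-1 : ℂ) ^ k * (Nat.factorial k : ℂ) * (Nat.choose m k : ℂ) * (Nat.choose n k : ℂ) *
          (ρ : ℂ) ^ k) •
        ((((m-k : ℕ) : ℂ) * z ^ (m-k-1) * (starRingEnd ℂ z) ^ (n-k)) • ContinuousLinearMap.id ℝ ℂ +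
         (((n-k : ℕ) : ℂ) * z ^ (m-k) * (starRingEnd ℂ z) ^ (n-k-1)) • (Complex.conjCLE : ℂ →L[ℝ] ℂ))) z := by
  unfold complexHermite
  apply HasFDerivAt.fun_sum
  intro k _
  have h := (hasFDerivAt_mono (m-k) (n-k) z).const_mul
    ((-1 : ℂ) ^ k * (Nat.factorial k : ℂ) * (Nat.choose m k : ℂ) * (Nat.choose n k : ℂ) * (ρ : ℂ) ^ k)
  convert h using 2
  · rfl
  · ring


/-- For `m ≥ 1` and fixed `ρ`, `z ↦ J_{m,n}(z,ρ)` is real-differentiable on `ℂ` and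
`∂/∂z J_{m,n}(z,ρ) = m · J_{m-1,n}(z,ρ)`. -/
theorem wirtingerDeriv_complexHermite (m n : ℕ) (hm : 1 ≤ m) (ρ : ℝ) :
    (∀ z : ℂ, DifferentiableAt ℝ (fun w => complexHermite m n w ρ) z) ∧
    (∀ z : ℂ, wirtingerDeriv (fun w => complexHermite m n w ρ) z
      = (m : ℂ) * complexHermite (m - 1) n z ρ) := by
  constructor
  · intro z; exact (hasFDerivAt_complexHermite m n ρ z).differentiableAt
  intro z
  have hf := (hasFDerivAt_complexHermite m n ρ z).fderiv
  unfold wirtingerDeriv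
  rw [hf]
  simp only [ContinuousLinearMap.sum_apply, ContinuousLinearMap.smul_apply,
    ContinuousLinearMap.add_apply, ContinuousLinearMap.id_apply,
    ContinuousLinearEquiv.coe_coe, Complex.conjCLE_apply, map_one, Complex.conj_I,
    smul_eq_mul, mul_one]
  rw [Finset.mul_sum, ← Finset.sum_sub_distrib, Finset.sum_div]
  have hLHS : ∀ k ∈ Finset.range (min m n + 1),
      ((((-1:ℂ)^k * k.factorial * (m.choose k) * (n.choose k) * (ρ:ℂ)^k) *
          (((m-k:ℕ):ℂ) * z^(m-k-1) * (starRingEnd ℂ z)^(n-k) +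
           ((n-k:ℕ):ℂ) * z^(m-k) * (starRingEnd ℂ z)^(n-k-1)) -
        Complex.I * (((-1:ℂ)^k * k.factorial * (m.choose k) * (n.choose k) * (ρ:ℂ)^k) *
          (((m-k:ℕ):ℂ) * z^(m-k-1) * (starRingEnd ℂ z)^(n-k) * Complex.I +
           ((n-k:ℕ):ℂ) * z^(m-k) * (starRingEnd ℂ z)^(n-k-1) * (-Complex.I)))) / 2)
      = ((-1:ℂ)^k * k.factorial * (m.choose k) * (n.choose k) * (ρ:ℂ)^k) *
          (((m-k:ℕ):ℂ) * z^(m-k-1) * (starRingEnd ℂ z)^(n-k)) := by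
    intro k _
    set c := ((-1:ℂ)^k * k.factorial * (m.choose k) * (n.choose k) * (ρ:ℂ)^k)
    set A := (((m-k:ℕ):ℂ) * z^(m-k-1) * (starRingEnd ℂ z)^(n-k))
    set B := (((n-k:ℕ):ℂ) * z^(m-k) * (starRingEnd ℂ z)^(n-k-1))
    linear_combination (c*(B-A)/2) * Complex.I_mul_I
  rw [Finset.sum_congr rfl hLHS]
  -- now prove  Σ_{range (min m n + 1)} c_k * ((m-k) z^(m-k-1) conj^(n-k)) = m * J_{m-1,n}
  have hext : (↑m : ℂ) * complexHermite (m-1) n z ρ =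
      ∑ k ∈ Finset.range (min m n + 1),
        (↑m : ℂ) * ((-1:ℂ)^k * k.factorial * ((m-1).choose k) * (n.choose k) * (ρ:ℂ)^k *
          z^(m-1-k) * (starRingEnd ℂ z)^(n-k)) := by
    unfold complexHermite
    rw [Finset.mul_sum]
    refine Finset.sum_subset (Finset.range_subset_range.2 (by omega : min (m-1) n + 1 ≤ min m n + 1)) ?_
    intro k hk hk'
    simp only [Finset.mem_range] at hk hk'
    have h0 : (m-1).choose k = 0 := Nat.choose_eq_zero_of_lt (by omega)
    simp [h0]
  rw [hext]
  apply Finset.sum_congr rfl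
  intro k hk
  simp only [Finset.mem_range] at hk
  have hkm : k ≤ m := by omega
  have hch : ((m-1).choose k : ℂ) * m = (m.choose k : ℂ) * ((m-k : ℕ) : ℂ) := by
    have h := Nat.choose_mul_succ_eq (m-1) k
    rw [Nat.sub_add_cancel hm] at h
    exact_mod_cast congrArg (fun x : ℕ => (x : ℂ)) h
  have hexp : m - 1 - k = m - k - 1 := by omega
  rw [hexp]
  linear_combination (-((-1:ℂ)^k * k.factorial * (n.choose k) * (ρ:ℂ)^k *
    z^(m-k-1) * (starRingEnd ℂ z)^(n-k))) * hch
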